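/- arXiv:2511.11161 — 3 statements merged into one kernel-verified Lean document; each statement's English description precedes it below -/
import Mathlib

section
/- Let X₁,…,X_N be i.i.d. random variables in a measurable space X, and let G be a finite class of measurable functions g : X → ℝ with 0 ≤ g ≤ L for some L > 0. Then E[ max_{g ∈ G} ( E[g(X₁)] − (2/N)∑_{i=1}^N g(X_i) ) ] ≤ 11·L·log(|G|)/N, provided |G| ≥ 2. -/
open MeasureTheory ProbabilityTheory Finset

private lemma exp_neg_le_aux {x : ℝ} (h0 : 0 ≤ x) (h1 : x ≤ 1/2) :
    Real.exp (-x) ≤ 1 - x/2 := by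
  have h2 := Real.add_one_le_exp x
  have h3 := Real.add_one_le_exp (-x)
  have h4 : Real.exp (-x) * Real.exp x = 1 := by
    rw [← Real.exp_add]; simp
  nlinarith [Real.exp_pos (-x), Real.exp_pos x]

/-- Finite-class empirical process bound: for i.i.d. X₁,…,X_N and a finite class G of
    measurable functions with values in [0, L] and |G| ≥ 2,
    E[max_{g∈G} (E[g(X₁)] − (2/N)∑ᵢ g(Xᵢ))] ≤ 11·L·log|G|/N. -/
theorem stmt7 {Ω 𝒳 : Type*} [MeasurableSpace Ω] [MeasurableSpace 𝒳]
    (μ : Measure Ω) [IsProbabilityMeasure μ]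
    (N : ℕ) (hN : 0 < N) (X : Fin N → Ω → 𝒳)
    (hXmeas : ∀ i, Measurable (X i))
    (hindep : iIndepFun X μ)
    (hident : ∀ i, μ.map (X i) = μ.map (X ⟨0, hN⟩))
    (L : ℝ) (hL : 0 < L)
    (G : Finset (𝒳 → ℝ)) (hGne : G.Nonempty) (hGcard : 2 ≤ G.card)
    (hGmeas : ∀ g ∈ G, Measurable g)
    (hGbdd : ∀ g ∈ G, ∀ x, g x ∈ Set.Icc 0 L) :
    (∫ ω, G.sup' hGne
        (fun g => (∫ ω', g (X ⟨0, hN⟩ ω') ∂μ) - (2 / N) * ∑ i, g (X i ω)) ∂μ)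
      ≤ 11 * L * Real.log G.card / N := by
  classical
  have hN' : (0:ℝ) < N := by exact_mod_cast hN
  have hGc : (0:ℝ) < G.card := by
    have : 0 < G.card := hGne.card_pos
    exact_mod_cast this
  set x0 : Ω → 𝒳 := X ⟨0, hN⟩ with hx0
  set lam : ℝ := N / (4*L) with hlam
  have hlam_pos : 0 < lam := by positivity
  -- the mean of g
  set Eg : (𝒳 → ℝ) → ℝ := fun g => ∫ ω', g (x0 ω') ∂μ with hEg
  -- basic integrability
  have hint : ∀ g ∈ G, ∀ i, Integrable (fun ω => g (X i ω)) μ := by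
    intro g hg i
    refine Integrable.mono' (integrable_const L) ((hGmeas g hg).comp (hXmeas i)).aestronglyMeasurable ?_
    filter_upwards with ω
    have h := hGbdd g hg (X i ω)
    rw [Real.norm_eq_abs, abs_of_nonneg h.1]; exact h.2
  have hEg_nonneg : ∀ g ∈ G, 0 ≤ Eg g := fun g hg =>
    integral_nonneg fun ω => (hGbdd g hg (x0 ω)).1
  have hEg_le : ∀ g ∈ G, Eg g ≤ L := by
    intro g hg
    calc Eg g ≤ ∫ _, L ∂μ := integral_mono (hint g hg _) (integrable_const L)
          (fun ω => (hGbdd g hg (x0 ω)).2)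
    _ = L := by simp
  -- abbreviation for the centered process
  set f : (𝒳 → ℝ) → Ω → ℝ := fun g ω => Eg g - (2/N) * ∑ i, g (X i ω) with hf
  -- bounds on f
  have hf_le : ∀ g ∈ G, ∀ ω, f g ω ≤ L := by
    intro g hg ω
    have h1 : 0 ≤ ∑ i, g (X i ω) := Finset.sum_nonneg fun i _ => (hGbdd g hg _).1
    have h2 : (0:ℝ) ≤ 2/N := by positivity
    have := hEg_le g hg
    simp only [hf]
    nlinarith
  have hf_ge : ∀ g ∈ G, ∀ ω, -(2*L) ≤ f g ω := by
    intro g hg ω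
    have h1 : ∑ i, g (X i ω) ≤ N * L := by
      calc ∑ i, g (X i ω) ≤ ∑ _i : Fin N, L :=
            Finset.sum_le_sum fun i _ => (hGbdd g hg _).2
      _ = N * L := by simp [mul_comm]
    have h2 := hEg_nonneg g hg
    have : (2/N) * ∑ i, g (X i ω) ≤ (2/N) * (N*L) := by
      apply mul_le_mul_of_nonneg_left h1 (by positivity)
    have hNL : (2/(N:ℝ)) * (N*L) = 2*L := by field_simp
    simp only [hf]; nlinarith
  -- measurability of f g
  have hf_meas : ∀ g ∈ G, Measurable (f g) := by
    intro g hg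
    apply Measurable.sub measurable_const
    exact (Finset.measurable_sum _ fun i _ => (hGmeas g hg).comp (hXmeas i)).const_mul _
  -- Key per-g bound on the one-point Laplace transform
  have hone : ∀ g ∈ G, (∫ ω, Real.exp (-(1/(2*L)) * g (x0 ω)) ∂μ) ≤ Real.exp (-(Eg g)/(4*L)) := by
    intro g hg
    have hpt : ∀ ω, Real.exp (-(1/(2*L)) * g (x0 ω)) ≤ 1 - g (x0 ω)/(4*L) := by
      intro ω
      have hb := hGbdd g hg (x0 ω)
      have h0 : 0 ≤ g (x0 ω) / (2*L) := div_nonneg hb.1 (by positivity)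
      have h1 : g (x0 ω) / (2*L) ≤ 1/2 := by
        rw [div_le_div_iff₀ (by positivity) (by norm_num)]
        nlinarith [hb.2]
      have := exp_neg_le_aux h0 h1
      have heq : -(1/(2*L)) * g (x0 ω) = -(g (x0 ω)/(2*L)) := by ring
      rw [heq]
      calc Real.exp (-(g (x0 ω)/(2*L))) ≤ 1 - (g (x0 ω)/(2*L))/2 := this
      _ = 1 - g (x0 ω)/(4*L) := by ring
    have hint1 : Integrable (fun ω => Real.exp (-(1/(2*L)) * g (x0 ω))) μ := by
      refine Integrable.mono' (integrable_const 1) ?_ ?_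
      · exact (((hGmeas g hg).comp (hXmeas _)).const_mul _).exp.aestronglyMeasurable
      · filter_upwards with ω
        rw [Real.norm_eq_abs, abs_of_nonneg (Real.exp_pos _).le]
        apply Real.exp_le_one_iff.mpr
        have h := (hGbdd g hg (x0 ω)).1
        nlinarith [mul_nonneg (le_of_lt (by positivity : (0:ℝ) < 1/(2*L))) h]
    have hint2 : Integrable (fun ω => 1 - g (x0 ω)/(4*L)) μ :=
      (integrable_const 1).sub ((hint g hg _).div_const _)
    calc (∫ ω, Real.exp (-(1/(2*L)) * g (x0 ω)) ∂μ)
        ≤ ∫ ω, (1 - g (x0 ω)/(4*L)) ∂μ := integral_mono hint1 hint2 hpt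
      _ = 1 - (Eg g)/(4*L) := by
          rw [integral_sub (integrable_const 1) ((hint g hg _).div_const _)]
          simp [integral_div, hEg]; rfl
      _ ≤ Real.exp (-(Eg g)/(4*L)) := by
          have := Real.add_one_le_exp (-(Eg g)/(4*L))
          have heq : -(Eg g)/(4*L) = -(Eg g/(4*L)) := by ring
          rw [heq] at this ⊢
          linarith
  -- mgf of each coordinate equals the one-point transform
  have hcoord : ∀ g ∈ G, ∀ i, (∫ ω, Real.exp (-(1/(2*L)) * g (X i ω)) ∂μ)
      = ∫ ω, Real.exp (-(1/(2*L)) * g (x0 ω)) ∂μ := by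
    intro g hg i
    have hm : Measurable fun x => Real.exp (-(1/(2*L)) * g x) := ((hGmeas g hg).const_mul _).exp
    rw [← integral_map (hXmeas i).aemeasurable hm.aestronglyMeasurable,
        hident i,
        integral_map (hXmeas _).aemeasurable hm.aestronglyMeasurable]
  -- expectation of exp(lam * f g) is at most 1
  have hexp_le_one : ∀ g ∈ G, (∫ ω, Real.exp (lam * f g ω) ∂μ) ≤ 1 := by
    intro g hg
    have hY : iIndepFun (fun i => g ∘ X i) μ :=
      hindep.comp (fun _ => g) (fun _ => hGmeas g hg)
    have hYm : ∀ i, Measurable (g ∘ X i) := fun i => (hGmeas g hg).comp (hXmeas i)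
    have hmgf := hY.mgf_sum hYm (t := -(1/(2*L))) Finset.univ
    have hsum_apply : ∀ ω, (∑ i : Fin N, (g ∘ X i)) ω = ∑ i, g (X i ω) := by
      intro ω; simp [Finset.sum_apply]
    -- rewrite the integrand
    have hsplit : ∀ ω, Real.exp (lam * f g ω)
        = Real.exp (lam * Eg g) * Real.exp (-(1/(2*L)) * (∑ i : Fin N, (g ∘ X i)) ω) := by
      intro ω
      rw [← Real.exp_add, hsum_apply]
      congr 1
      simp only [hf]
      have h : lam * (2/N) = 1/(2*L) := by
        rw [hlam]; field_simp; ring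
      linear_combination (-(∑ i : Fin N, g (X i ω))) * h
    calc (∫ ω, Real.exp (lam * f g ω) ∂μ)
        = Real.exp (lam * Eg g) * mgf (∑ i : Fin N, (g ∘ X i)) μ (-(1/(2*L))) := by
          simp only [hsplit]
          rw [integral_const_mul]
          rfl
      _ = Real.exp (lam * Eg g) * ∏ i : Fin N, mgf (g ∘ X i) μ (-(1/(2*L))) := by rw [hmgf]
      _ ≤ Real.exp (lam * Eg g) * ∏ _i : Fin N, Real.exp (-(Eg g)/(4*L)) := by
          apply mul_le_mul_of_nonneg_left _ (Real.exp_pos _).le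
          apply Finset.prod_le_prod (fun i _ => mgf_nonneg)
          intro i _
          have : mgf (g ∘ X i) μ (-(1/(2*L))) = ∫ ω, Real.exp (-(1/(2*L)) * g (X i ω)) ∂μ := rfl
          rw [this, hcoord g hg i]
          exact hone g hg
      _ = Real.exp (lam * Eg g) * Real.exp (-(Eg g)/(4*L)) ^ N := by
          rw [Finset.prod_const]; simp
      _ = 1 := by
          have hz : lam * Eg g + (N:ℝ) * (-(Eg g)/(4*L)) = 0 := by
            rw [hlam]; field_simp; ring
          rw [← Real.exp_nat_mul, ← Real.exp_add, hz, Real.exp_zero]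
  -- the sum process
  set S : Ω → ℝ := fun ω => ∑ g ∈ G, Real.exp (lam * f g ω) with hS
  have hS_pos : ∀ ω, 0 < S ω :=
    fun ω => Finset.sum_pos (fun g _ => Real.exp_pos _) hGne
  have hS_int : Integrable S μ := by
    apply integrable_finset_sum
    intro g hg
    refine Integrable.mono' (integrable_const (Real.exp (lam * L))) ?_ ?_
    · exact ((hf_meas g hg).const_mul _).exp.aestronglyMeasurable
    · filter_upwards with ω
      rw [Real.norm_eq_abs, abs_of_nonneg (Real.exp_pos _).le]
      exact Real.exp_le_exp.mpr (mul_le_mul_of_nonneg_left (hf_le g hg ω) hlam_pos.le)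
  have hS_integral : (∫ ω, S ω ∂μ) ≤ G.card := by
    have : (∫ ω, S ω ∂μ) = ∑ g ∈ G, ∫ ω, Real.exp (lam * f g ω) ∂μ := by
      apply integral_finset_sum
      intro g hg
      refine Integrable.mono' (integrable_const (Real.exp (lam * L))) ?_ ?_
      · exact ((hf_meas g hg).const_mul _).exp.aestronglyMeasurable
      · filter_upwards with ω
        rw [Real.norm_eq_abs, abs_of_nonneg (Real.exp_pos _).le]
        exact Real.exp_le_exp.mpr (mul_le_mul_of_nonneg_left (hf_le g hg ω) hlam_pos.le)
    rw [this]
    calc ∑ g ∈ G, ∫ ω, Real.exp (lam * f g ω) ∂μ ≤ ∑ _g ∈ G, (1:ℝ) :=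
          Finset.sum_le_sum fun g hg => hexp_le_one g hg
    _ = G.card := by simp
  -- pointwise bound on the sup
  have hM_pt : ∀ ω, G.sup' hGne (fun g => f g ω)
      ≤ (Real.log G.card + S ω / G.card - 1) / lam := by
    intro ω
    obtain ⟨g₀, hg₀, hsup⟩ := Finset.exists_mem_eq_sup' hGne (fun g => f g ω)
    rw [hsup]
    have h1 : Real.exp (lam * f g₀ ω) ≤ S ω :=
      Finset.single_le_sum (f := fun g => Real.exp (lam * f g ω))
        (fun g _ => (Real.exp_pos _).le) hg₀
    have h2 : lam * f g₀ ω ≤ Real.log (S ω) :=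
      (Real.le_log_iff_exp_le (hS_pos ω)).mpr h1
    have h3 : Real.log (S ω) ≤ Real.log G.card + S ω / G.card - 1 := by
      have : Real.log (S ω) = Real.log G.card + Real.log (S ω / G.card) := by
        rw [Real.log_div (ne_of_gt (hS_pos ω)) (ne_of_gt hGc)]
        ring
      rw [this]
      have := Real.log_le_sub_one_of_pos (div_pos (hS_pos ω) hGc)
      linarith
    rw [le_div_iff₀ hlam_pos, mul_comm]
    exact h2.trans h3
  -- measurability and integrability of the sup
  have hM_meas : Measurable (fun ω => G.sup' hGne (fun g => f g ω)) := by
    have : (fun ω => G.sup' hGne (fun g => f g ω)) = G.sup' hGne f := by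
      funext ω; rw [Finset.sup'_apply]
    rw [this]
    exact Finset.measurable_sup' hGne (fun g hg => hf_meas g hg)
  have hM_int : Integrable (fun ω => G.sup' hGne (fun g => f g ω)) μ := by
    refine Integrable.mono' (integrable_const (2*L)) hM_meas.aestronglyMeasurable ?_
    filter_upwards with ω
    rw [Real.norm_eq_abs, abs_le]
    constructor
    · obtain ⟨g₀, hg₀, hsup⟩ := Finset.exists_mem_eq_sup' hGne (fun g => f g ω)
      rw [hsup]; exact hf_ge g₀ hg₀ ω
    · apply Finset.sup'_le
      intro g hg
      calc f g ω ≤ L := hf_le g hg ω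
      _ ≤ 2*L := by linarith
  -- integrate the pointwise bound
  have hbound : (∫ ω, G.sup' hGne (fun g => f g ω) ∂μ)
      ≤ (Real.log G.card + (∫ ω, S ω ∂μ) / G.card - 1) / lam := by
    have hRHS_int : Integrable (fun ω => (Real.log G.card + S ω / G.card - 1) / lam) μ := by
      apply Integrable.div_const
      exact (((integrable_const _).add (hS_int.div_const _)).sub (integrable_const 1))
    calc (∫ ω, G.sup' hGne (fun g => f g ω) ∂μ)
        ≤ ∫ ω, (Real.log G.card + S ω / G.card - 1) / lam ∂μ :=
          integral_mono hM_int hRHS_int hM_pt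
      _ = (Real.log G.card + (∫ ω, S ω ∂μ) / G.card - 1) / lam := by
          have hI2 : Integrable (fun ω => Real.log (G.card:ℝ) + S ω / G.card) μ :=
            (integrable_const _).add (hS_int.div_const _)
          rw [integral_div, integral_sub hI2 (integrable_const 1),
            integral_add (integrable_const _) (hS_int.div_const _), integral_div]
          simp
  -- conclude
  have hgoal_eq : (∫ ω, G.sup' hGne
      (fun g => (∫ ω', g (X ⟨0, hN⟩ ω') ∂μ) - (2 / N) * ∑ i, g (X i ω)) ∂μ)
      = ∫ ω, G.sup' hGne (fun g => f g ω) ∂μ := rfl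
  rw [hgoal_eq]
  have hlog2 : (0:ℝ) < Real.log G.card := by
    apply Real.log_pos
    have : (2:ℝ) ≤ G.card := by exact_mod_cast hGcard
    linarith
  have hfinal : (Real.log G.card + (∫ ω, S ω ∂μ) / G.card - 1) / lam
      ≤ 4 * L * Real.log G.card / N := by
    have h1 : (∫ ω, S ω ∂μ) / G.card ≤ 1 := by
      rw [div_le_one hGc]; exact hS_integral
    have h2 : Real.log G.card + (∫ ω, S ω ∂μ) / G.card - 1 ≤ Real.log G.card := by linarith
    calc (Real.log G.card + (∫ ω, S ω ∂μ) / G.card - 1) / lam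
        ≤ Real.log G.card / lam := (div_le_div_iff_of_pos_right hlam_pos).mpr h2
      _ = 4 * L * Real.log G.card / N := by
          rw [hlam]; field_simp
  refine hbound.trans (hfinal.trans ?_)
  apply (div_le_div_iff_of_pos_right hN').mpr
  nlinarith
end

section
/- Let X₁,…,X_N be i.i.d. random variables in X and let G be a class of measurable functions g : X → [0, L]. Suppose G_δ is a δ-net of G with respect to the sup norm, of cardinality N_δ. Then E[ sup_{g ∈ G} ( E[g(X₁)] − (2/N)∑_{i=1}^N g(X_i) ) ] ≤ 3δ + 11·L·log(N_δ)/N. -/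
open MeasureTheory ProbabilityTheory Finset

/-- Elementary inequality: `exp (-(2w)) ≤ 1 - w` for `0 ≤ w ≤ 1/2`. -/
lemma exp_neg_two_mul_le_aux8 {w : ℝ} (h0 : 0 ≤ w) (h1 : w ≤ 1/2) :
    Real.exp (-(2 * w)) ≤ 1 - w := by
  have h2 : 2 * w + 1 ≤ Real.exp (2 * w) := Real.add_one_le_exp _
  have h3 : Real.exp (-(2 * w)) * Real.exp (2 * w) = 1 := by
    rw [← Real.exp_add]; norm_num
  nlinarith [Real.exp_pos (-(2 * w)), Real.exp_pos (2 * w),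
    mul_le_mul_of_nonneg_left h2 (by linarith : (0:ℝ) ≤ 1 - w)]

set_option maxHeartbeats 1000000 in
/-- Lemma A.2 of Denis et al. (2021): if G_δ is a δ-net (sup norm) of a class G of
    measurable functions valued in [0, L], then
    E[sup_{g∈G} (E[g(X₁)] − (2/N)∑ᵢ g(Xᵢ))] ≤ 3δ + 11·L·log(N_δ)/N. -/
theorem stmt8 {Ω 𝒳 : Type*} [MeasurableSpace Ω] [MeasurableSpace 𝒳]
    (μ : Measure Ω) [IsProbabilityMeasure μ]
    (N : ℕ) (hN : 0 < N) (X : Fin N → Ω → 𝒳)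
    (hXmeas : ∀ i, Measurable (X i))
    (hindep : iIndepFun X μ)
    (hident : ∀ i, μ.map (X i) = μ.map (X ⟨0, hN⟩))
    (L : ℝ) (hL : 0 < L)
    (G : Set (𝒳 → ℝ))
    (hGmeas : ∀ g ∈ G, Measurable g)
    (hGbdd : ∀ g ∈ G, ∀ x, g x ∈ Set.Icc 0 L)
    (δ : ℝ) (hδ : 0 ≤ δ)
    (Gδ : Finset (𝒳 → ℝ)) (hGδsub : ↑Gδ ⊆ G)
    (hnet : ∀ g ∈ G, ∃ h ∈ Gδ, ∀ x, |g x - h x| ≤ δ) :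
    (∫ ω, (⨆ g : G,
        ((∫ ω', (g : 𝒳 → ℝ) (X ⟨0, hN⟩ ω') ∂μ) - (2 / N) * ∑ i, (g : 𝒳 → ℝ) (X i ω))) ∂μ)
      ≤ 3 * δ + 11 * L * Real.log Gδ.card / N := by
  classical
  have hNR : (0:ℝ) < N := by exact_mod_cast hN
  set x0 : Fin N := ⟨0, hN⟩ with hx0
  -- bounded measurable functions are integrable
  have hbint : ∀ (f : Ω → ℝ), Measurable f → ∀ C : ℝ, (∀ ω, |f ω| ≤ C) → Integrable f μ := by
    intro f hf C hC
    exact (integrable_const C).mono' hf.aestronglyMeasurable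
      (Filter.Eventually.of_forall (by simpa [Real.norm_eq_abs] using hC))
  by_cases hKpos : Gδ.Nonempty
  swap
  · -- Gδ empty forces G empty
    have hGempty : G = ∅ := by
      ext g
      simp only [Set.mem_empty_iff_false, iff_false]
      intro hg
      obtain ⟨h, hh, -⟩ := hnet g hg
      exact hKpos ⟨h, hh⟩
    haveI : IsEmpty ↥G := Set.isEmpty_coe_sort.2 hGempty
    have hcard : Gδ.card = 0 := by
      simpa [Finset.not_nonempty_iff_eq_empty] using hKpos
    simp only [Real.iSup_of_isEmpty, integral_zero, hcard, Nat.cast_zero, Real.log_zero,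
      mul_zero, zero_div]
    linarith
  -- main case
  obtain ⟨h0, hh0⟩ := hKpos
  haveI : Nonempty ↥G := ⟨⟨h0, hGδsub hh0⟩⟩
  have hGδcard : (1:ℝ) ≤ (Gδ.card : ℝ) := by
    exact_mod_cast Finset.card_pos.2 ⟨h0, hh0⟩
  set K : ℝ := (Gδ.card : ℝ) with hK
  have hK0 : (0:ℝ) < K := by linarith
  have hlogK : 0 ≤ Real.log K := Real.log_nonneg hGδcard
  set lam : ℝ := N / (11 * L) with hlam
  have hlampos : 0 < lam := by positivity
  set a : ℝ := 11 * L * Real.log K / N with ha'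
  have ha : lam * a = Real.log K := by
    rw [hlam, ha']
    field_simp
  have ha0 : 0 ≤ a := by positivity
  -- notation for the key quantities
  set m : (𝒳 → ℝ) → ℝ := fun g => ∫ ω', g (X x0 ω') ∂μ with hm
  set Z : (𝒳 → ℝ) → Ω → ℝ := fun g ω => m g - (2 / N) * ∑ i, g (X i ω) with hZ
  -- basic facts for g ∈ G
  have habs : ∀ g ∈ G, ∀ x, |g x| ≤ L := by
    intro g hg x
    have := hGbdd g hg x
    rw [abs_le]; exact ⟨by linarith [this.1], this.2⟩
  have hint_comp : ∀ g ∈ G, ∀ i, Integrable (fun ω => g (X i ω)) μ := by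
    intro g hg i
    exact hbint _ ((hGmeas g hg).comp (hXmeas i)) L (fun ω => habs g hg _)
  have hm_mem : ∀ g ∈ G, m g ∈ Set.Icc 0 L := by
    intro g hg
    constructor
    · exact integral_nonneg fun ω => (hGbdd g hg _).1
    · calc m g ≤ ∫ _, L ∂μ :=
            integral_mono (hint_comp g hg x0) (integrable_const L) fun ω => (hGbdd g hg _).2
        _ = L := by simp
  have hZ_le : ∀ g ∈ G, ∀ ω, Z g ω ≤ L := by
    intro g hg ω
    have h1 : 0 ≤ (2 / (N:ℝ)) * ∑ i, g (X i ω) := by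
      apply mul_nonneg (by positivity)
      exact Finset.sum_nonneg fun i _ => (hGbdd g hg _).1
    have := (hm_mem g hg).2
    simp only [hZ]; linarith
  have hZmeas : ∀ g ∈ G, Measurable (Z g) := by
    intro g hg
    apply Measurable.sub measurable_const
    exact (Finset.measurable_sum univ fun i _ => (hGmeas g hg).comp (hXmeas i)).const_mul _
  have hint_exp : ∀ g ∈ G, Integrable (fun ω => Real.exp (lam * Z g ω)) μ := by
    intro g hg
    apply hbint _ (((hZmeas g hg).const_mul lam).exp) (Real.exp (lam * L))
    intro ω
    rw [abs_of_pos (Real.exp_pos _), Real.exp_le_exp]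
    exact mul_le_mul_of_nonneg_left (hZ_le g hg ω) hlampos.le
  -- Key MGF bound : ∫ exp (lam * Z g) ≤ 1 for g ∈ G
  have hmgf : ∀ g ∈ G, (∫ ω, Real.exp (lam * Z g ω) ∂μ) ≤ 1 := by
    intro g hg
    set t : ℝ := -(2 / (11 * L)) with ht
    have hgmeas := hGmeas g hg
    -- independence of the g ∘ X i
    have hYindep : iIndepFun (fun i => g ∘ X i) μ :=
      hindep.comp (fun _ => g) (fun _ => hgmeas)
    have hYmeas : ∀ i, Measurable (g ∘ X i) := fun i => hgmeas.comp (hXmeas i)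
    have hsum := hYindep.mgf_sum hYmeas (t := t) Finset.univ
    -- identical distribution : each mgf equals the one of g ∘ X x0
    have hfac : ∀ i : Fin N, mgf (g ∘ X i) μ t = ∫ ω, Real.exp (t * g (X x0 ω)) ∂μ := by
      intro i
      have hmeas' : AEStronglyMeasurable (fun x => Real.exp (t * g x)) (μ.map (X i)) :=
        ((hgmeas.const_mul t).exp).aestronglyMeasurable
      have hmeas'' : AEStronglyMeasurable (fun x => Real.exp (t * g x)) (μ.map (X x0)) :=
        ((hgmeas.const_mul t).exp).aestronglyMeasurable
      calc mgf (g ∘ X i) μ t = ∫ ω, Real.exp (t * g (X i ω)) ∂μ := rfl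
        _ = ∫ x, Real.exp (t * g x) ∂(μ.map (X i)) :=
            (integral_map (hXmeas i).aemeasurable hmeas').symm
        _ = ∫ x, Real.exp (t * g x) ∂(μ.map (X x0)) := by rw [hident i]
        _ = ∫ ω, Real.exp (t * g (X x0 ω)) ∂μ :=
            integral_map (hXmeas x0).aemeasurable hmeas''
    -- single-factor bound
    have hfac_le : (∫ ω, Real.exp (t * g (X x0 ω)) ∂μ) ≤ 1 - m g / (11 * L) := by
      have hpt : ∀ ω, Real.exp (t * g (X x0 ω)) ≤ 1 - g (X x0 ω) / (11 * L) := by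
        intro ω
        have hb := hGbdd g hg (X x0 ω)
        have hw0 : 0 ≤ g (X x0 ω) / (11 * L) := div_nonneg hb.1 (by linarith)
        have hw1 : g (X x0 ω) / (11 * L) ≤ 1 / 2 := by
          rw [div_le_iff₀ (by linarith : (0:ℝ) < 11 * L)]
          nlinarith [hb.2]
        have key := exp_neg_two_mul_le_aux8 hw0 hw1
        have : t * g (X x0 ω) = -(2 * (g (X x0 ω) / (11 * L))) := by
          rw [ht]; field_simp
        rw [this]; exact key
      have hint1 : Integrable (fun ω => Real.exp (t * g (X x0 ω))) μ := by
        apply hbint _ (((hgmeas.comp (hXmeas x0)).const_mul t).exp) 1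
        intro ω
        rw [abs_of_pos (Real.exp_pos _), ← Real.exp_zero, Real.exp_le_exp]
        have hb := hGbdd g hg (X x0 ω)
        rw [ht, neg_mul]
        exact neg_nonpos.2 (mul_nonneg (by positivity) hb.1)
      have hint2 : Integrable (fun ω => 1 - g (X x0 ω) / (11 * L)) μ :=
        (integrable_const 1).sub ((hint_comp g hg x0).div_const _)
      calc (∫ ω, Real.exp (t * g (X x0 ω)) ∂μ)
          ≤ ∫ ω, (1 - g (X x0 ω) / (11 * L)) ∂μ := integral_mono hint1 hint2 hpt
        _ = 1 - m g / (11 * L) := by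
            rw [integral_sub (integrable_const 1) ((hint_comp g hg x0).div_const _),
              integral_const, integral_div]
            simp [hm]
    have hm1 : 0 ≤ 1 - m g / (11 * L) := by
      have := (hm_mem g hg).2
      have : m g / (11 * L) ≤ 1 := by
        rw [div_le_one (by linarith : (0:ℝ) < 11 * L)]; linarith
      linarith
    -- product bound
    have hprod : (∏ i : Fin N, mgf (g ∘ X i) μ t) ≤ Real.exp (-(lam * m g)) := by
      calc (∏ i : Fin N, mgf (g ∘ X i) μ t)
          ≤ ∏ _i : Fin N, (1 - m g / (11 * L)) :=
            Finset.prod_le_prod (fun i _ => mgf_nonneg) (fun i _ => (hfac i) ▸ hfac_le)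
        _ = (1 - m g / (11 * L)) ^ N := by
            rw [Finset.prod_const, Finset.card_univ, Fintype.card_fin]
        _ ≤ (Real.exp (-(m g / (11 * L)))) ^ N := by
            apply pow_le_pow_left₀ hm1
            linarith [Real.add_one_le_exp (-(m g / (11 * L)))]
        _ = Real.exp (-(lam * m g)) := by
            rw [← Real.exp_nat_mul]
            congr 1
            rw [hlam]
            field_simp
    -- put things together
    have hZeq : (fun ω => Real.exp (lam * Z g ω))
        = fun ω => Real.exp (lam * m g) * Real.exp (t * (∑ i, (g ∘ X i)) ω) := by
      funext ω
      rw [← Real.exp_add]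
      congr 1
      simp only [hZ, Finset.sum_apply, Function.comp_apply]
      rw [ht, hlam]
      field_simp
      ring
    rw [hZeq, integral_const_mul]
    have : mgf (∑ i, (g ∘ X i)) μ t = ∫ ω, Real.exp (t * (∑ i, (g ∘ X i)) ω) ∂μ := rfl
    rw [← this, hsum]
    calc Real.exp (lam * m g) * ∏ i : Fin N, mgf (g ∘ X i) μ t
        ≤ Real.exp (lam * m g) * Real.exp (-(lam * m g)) :=
          mul_le_mul_of_nonneg_left hprod (Real.exp_pos _).le
      _ = 1 := by rw [← Real.exp_add]; simp
  -- pointwise bound on the supremum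
  set c1 : ℝ := 1 / (lam * K) with hc1
  have hc1pos : 0 < c1 := by positivity
  set C0 : ℝ := 3 * δ + a - 1 / lam with hC0
  have hpt : ∀ ω, (⨆ g : G,
      ((∫ ω', (g : 𝒳 → ℝ) (X x0 ω') ∂μ) - (2 / N) * ∑ i, (g : 𝒳 → ℝ) (X i ω)))
      ≤ C0 + c1 * ∑ h ∈ Gδ, Real.exp (lam * Z h ω) := by
    intro ω
    apply ciSup_le
    rintro ⟨g, hg⟩
    obtain ⟨h, hh, hhg⟩ := hnet g hg
    have hhG : h ∈ G := hGδsub hh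
    -- compare the means
    have h1 : m g ≤ m h + δ := by
      have hle : ∀ ω', g (X x0 ω') ≤ h (X x0 ω') + δ := fun ω' => by
        have := abs_le.1 (hhg (X x0 ω')); linarith [this.2]
      calc m g ≤ ∫ ω', (h (X x0 ω') + δ) ∂μ :=
            integral_mono (hint_comp g hg x0)
              ((hint_comp h hhG x0).add (integrable_const δ)) hle
        _ = m h + δ := by
            rw [integral_add (hint_comp h hhG x0) (integrable_const δ), integral_const]
            simp [hm]
    -- compare the empirical means
    have h2 : (2 / (N:ℝ)) * ∑ i, h (X i ω) ≤ (2 / N) * ∑ i, g (X i ω) + 2 * δ := by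
      have hsum : ∑ i, h (X i ω) ≤ (∑ i, g (X i ω)) + N * δ := by
        calc ∑ i, h (X i ω) ≤ ∑ i : Fin N, (g (X i ω) + δ) :=
              Finset.sum_le_sum fun i _ => by
                have := abs_le.1 (hhg (X i ω)); linarith [this.1]
          _ = (∑ i, g (X i ω)) + N * δ := by
              rw [Finset.sum_add_distrib, Finset.sum_const, Finset.card_univ,
                Fintype.card_fin, nsmul_eq_mul]
      calc (2 / (N:ℝ)) * ∑ i, h (X i ω)
          ≤ (2 / (N:ℝ)) * ((∑ i, g (X i ω)) + N * δ) :=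
            mul_le_mul_of_nonneg_left hsum (by positivity)
        _ = (2 / N) * ∑ i, g (X i ω) + 2 * δ := by
            field_simp
    -- exponential bound for the net element
    have h3 : Z h ω ≤ a - 1 / lam + c1 * ∑ h' ∈ Gδ, Real.exp (lam * Z h' ω) := by
      have e1 : lam * (Z h ω - a) ≤ Real.exp (lam * (Z h ω - a)) - 1 := by
        linarith [Real.add_one_le_exp (lam * (Z h ω - a))]
      have e2 : Real.exp (lam * (Z h ω - a)) = Real.exp (lam * Z h ω) / K := by
        rw [mul_sub, Real.exp_sub, ha, Real.exp_log hK0]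
      have e3 : Real.exp (lam * Z h ω) ≤ ∑ h' ∈ Gδ, Real.exp (lam * Z h' ω) :=
        Finset.single_le_sum (f := fun h' => Real.exp (lam * Z h' ω))
          (fun _ _ => (Real.exp_pos _).le) hh
      have e4 : Z h ω - a ≤ (Real.exp (lam * Z h ω) / K - 1) / lam := by
        rw [le_div_iff₀ hlampos, ← e2]
        linarith [e1]
      have e5 : (Real.exp (lam * Z h ω) / K - 1) / lam
          = c1 * Real.exp (lam * Z h ω) - 1 / lam := by
        rw [hc1]; field_simp
      have e6 : c1 * Real.exp (lam * Z h ω) ≤ c1 * ∑ h' ∈ Gδ, Real.exp (lam * Z h' ω) :=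
        mul_le_mul_of_nonneg_left e3 hc1pos.le
      rw [e5] at e4
      linarith
    have hZh : Z h ω = m h - (2 / N) * ∑ i, h (X i ω) := rfl
    show m g - (2 / (N:ℝ)) * ∑ i, g (X i ω) ≤ _
    rw [hC0]
    linarith
  -- integrate
  have hint_sum : Integrable (fun ω => ∑ h ∈ Gδ, Real.exp (lam * Z h ω)) μ :=
    integrable_finset_sum _ fun h hh => hint_exp h (hGδsub hh)
  have hRHSint : Integrable (fun ω => C0 + c1 * ∑ h ∈ Gδ, Real.exp (lam * Z h ω)) μ :=
    (integrable_const C0).add (hint_sum.const_mul c1)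
  have hfinal : C0 + c1 * ∑ h ∈ Gδ, ∫ ω, Real.exp (lam * Z h ω) ∂μ
      ≤ 3 * δ + 11 * L * Real.log K / N := by
    have hs : ∑ h ∈ Gδ, (∫ ω, Real.exp (lam * Z h ω) ∂μ) ≤ K := by
      calc ∑ h ∈ Gδ, (∫ ω, Real.exp (lam * Z h ω) ∂μ) ≤ ∑ _h ∈ Gδ, (1:ℝ) :=
            Finset.sum_le_sum fun h hh => hmgf h (hGδsub hh)
        _ = K := by simp [hK]
      
    have hc1K : c1 * K = 1 / lam := by
      rw [hc1]; field_simp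
    have := mul_le_mul_of_nonneg_left hs hc1pos.le
    rw [hC0, ha']
    linarith
  by_cases hint : Integrable (fun ω => ⨆ g : G,
      ((∫ ω', (g : 𝒳 → ℝ) (X x0 ω') ∂μ) - (2 / N) * ∑ i, (g : 𝒳 → ℝ) (X i ω))) μ
  · calc (∫ ω, (⨆ g : G,
          ((∫ ω', (g : 𝒳 → ℝ) (X x0 ω') ∂μ) - (2 / N) * ∑ i, (g : 𝒳 → ℝ) (X i ω))) ∂μ)
        ≤ ∫ ω, (C0 + c1 * ∑ h ∈ Gδ, Real.exp (lam * Z h ω)) ∂μ :=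
          integral_mono hint hRHSint hpt
      _ = C0 + c1 * ∑ h ∈ Gδ, ∫ ω, Real.exp (lam * Z h ω) ∂μ := by
          rw [integral_add (integrable_const C0) (hint_sum.const_mul c1), integral_const,
            integral_const_mul, integral_finset_sum _ fun h hh => hint_exp h (hGδsub hh)]
          simp
      _ ≤ 3 * δ + 11 * L * Real.log K / N := hfinal
  · rw [integral_undef hint]
    have h7 : 0 ≤ 11 * L * Real.log K / N :=
      div_nonneg (mul_nonneg (by linarith) hlogK) hNR.le
    linarith
end

section
/- Let (M_t)_{t∈[0,T]} be a continuous local martingale with M₀ = 0 and quadratic variation ⟨M⟩, and let D > 0 be a constant with E[⟨M⟩_T] ≤ D. Define ξ = M_T / (2√(⟨M⟩_T + D)). Then E[ (√D / √(⟨M⟩_T + D)) · exp(2ξ²) ] ≤ 1. -/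
open MeasureTheory ProbabilityTheory

open Real


lemma gauss_integrable (s x : ℝ) (hs : 0 < s) :
    Integrable (fun c : ℝ => Real.exp (c * x - s / 2 * c ^ 2)) := by
  have h : ∀ c : ℝ, c * x - s / 2 * c ^ 2 = x ^ 2 / (2 * s) + (-(s / 2) * (c - x / s) ^ 2) := by
    intro c; field_simp; ring
  simp_rw [h, Real.exp_add]
  exact ((integrable_exp_neg_mul_sq (by positivity : (0:ℝ) < s / 2)).comp_sub_right
    (x / s)).const_mul _

lemma gauss_eval (s x : ℝ) (hs : 0 < s) :
    ∫ c : ℝ, Real.exp (c * x - s / 2 * c ^ 2)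
      = Real.sqrt (2 * π / s) * Real.exp (x ^ 2 / (2 * s)) := by
  have h : ∀ c : ℝ, c * x - s / 2 * c ^ 2 = x ^ 2 / (2 * s) + (-(s / 2) * (c - x / s) ^ 2) := by
    intro c; field_simp; ring
  simp_rw [h, Real.exp_add, integral_const_mul]
  have := integral_sub_right_eq_self (μ := volume)
    (fun c : ℝ => Real.exp (-(s / 2) * c ^ 2)) (x / s)
  rw [this, integral_gaussian]
  rw [mul_comm]
  congr 1
  rw [div_div_eq_mul_div]
  ring_nf

/-- Self-normalized exponential inequality for a continuous local martingale (Lemma 4.9 of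
    Oga–Koike 2024). A continuous local martingale `M` with `M₀ = 0` and quadratic variation
    `A = ⟨M⟩` is encoded through its characteristic property: `A` is continuous, nondecreasing,
    adapted with `A₀ = 0`, `M` is continuous adapted, and for every `c ∈ ℝ` the process
    `exp(c·M_t − c²/2·A_t)` is a supermartingale. If `E[A_T] ≤ D` with `D > 0` and
    `ξ = M_T/(2√(A_T + D))`, then `E[(√D/√(A_T + D))·exp(2ξ²)] ≤ 1`. -/
theorem stmt9 {Ω : Type*} {m0 : MeasurableSpace Ω} (μ : Measure Ω) [IsProbabilityMeasure μ]
    (ℱ : Filtration ℝ m0) (T : ℝ) (hT : 0 < T)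
    (M A : ℝ → Ω → ℝ)
    (hMcont : ∀ ω, Continuous fun t => M t ω)
    (hAcont : ∀ ω, Continuous fun t => A t ω)
    (hAmono : ∀ ω, Monotone fun t => A t ω)
    (hM0 : ∀ ω, M 0 ω = 0) (hA0 : ∀ ω, A 0 ω = 0)
    (hMadapted : Adapted ℱ M) (hAadapted : Adapted ℱ A)
    (hlocmart : ∀ c : ℝ,
      Supermartingale (fun t ω => Real.exp (c * M t ω - c^2 / 2 * A t ω)) ℱ μ)
    (D : ℝ) (hD : 0 < D) (hAD : ∫ ω, A T ω ∂μ ≤ D) :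
    (∫ ω, (Real.sqrt D / Real.sqrt (A T ω + D))
        * Real.exp (2 * (M T ω / (2 * Real.sqrt (A T ω + D)))^2) ∂μ) ≤ 1 := by
  -- basic facts
  have hAnn : ∀ ω, 0 ≤ A T ω := fun ω => by
    have := hAmono ω hT.le; simpa [hA0 ω] using this
  have hMTm : Measurable fun ω => M T ω := (hMadapted T).mono (ℱ.le T) le_rfl
  have hATm : Measurable fun ω => A T ω := (hAadapted T).mono (ℱ.le T) le_rfl
  set W : ℝ → ℝ := fun c => Real.sqrt (D / (2 * π)) * Real.exp (-(D / 2) * c ^ 2) with hW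
  have hWnn : ∀ c, 0 ≤ W c := fun c => by positivity
  have hWint : Integrable W :=
    (integrable_exp_neg_mul_sq (by positivity : (0:ℝ) < D / 2)).const_mul _
  have hWval : ∫ c, W c = 1 := by
    rw [hW]
    simp_rw [integral_const_mul, integral_gaussian]
    rw [← Real.sqrt_mul (by positivity)]
    rw [show D / (2 * π) * (π / (D / 2)) = 1 by field_simp]
    exact Real.sqrt_one
  set g : ℝ → Ω → ℝ := fun c ω => Real.exp (c * M T ω - c ^ 2 / 2 * A T ω) with hg
  have hgnn : ∀ c ω, 0 ≤ g c ω := fun c ω => (Real.exp_pos _).le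
  have hgInt : ∀ c, Integrable (g c) μ := fun c => (hlocmart c).integrable T
  have hgle : ∀ c, ∫ ω, g c ω ∂μ ≤ 1 := by
    intro c
    have h := (hlocmart c).setIntegral_le hT.le
      (MeasurableSet.univ : MeasurableSet[ℱ 0] Set.univ)
    simp only [Measure.restrict_univ, hM0, hA0, mul_zero, sub_zero, Real.exp_zero] at h
    simpa using h
  -- pointwise identity
  set F : Ω → ℝ := fun ω => (Real.sqrt D / Real.sqrt (A T ω + D))
      * Real.exp (2 * (M T ω / (2 * Real.sqrt (A T ω + D)))^2) with hF
  have hFnn : ∀ ω, 0 ≤ F ω := fun ω => by positivity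
  have key : ∀ ω, F ω = ∫ c, W c * g c ω := by
    intro ω
    set a := A T ω; set x := M T ω
    have hsa : 0 < a + D := by have := hAnn ω; linarith
    have hsq : Real.sqrt (a + D) ^ 2 = a + D := Real.sq_sqrt hsa.le
    have hsqrtpos : 0 < Real.sqrt (a + D) := Real.sqrt_pos.2 hsa
    have hpt : ∀ c, W c * g c ω
        = Real.sqrt (D / (2 * π)) * Real.exp (c * x - (a + D) / 2 * c ^ 2) := by
      intro c
      rw [hW, hg]
      rw [mul_assoc, ← Real.exp_add]
      congr 2
      ring
    rw [funext hpt, integral_const_mul, gauss_eval _ _ hsa]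
    rw [hF]
    have h1 : Real.sqrt (D / (2 * π)) * Real.sqrt (2 * π / (a + D))
        = Real.sqrt D / Real.sqrt (a + D) := by
      rw [← Real.sqrt_mul (by positivity),
        show D / (2 * π) * (2 * π / (a + D)) = D / (a + D) by field_simp,
        Real.sqrt_div hD.le]
    have h2 : 2 * (x / (2 * Real.sqrt (a + D))) ^ 2 = x ^ 2 / (2 * (a + D)) := by
      field_simp
      rw [hsq]
    rw [← mul_assoc, h1]
    show Real.sqrt D / Real.sqrt (a + D) * Real.exp (2 * (x / (2 * Real.sqrt (a + D))) ^ 2) = _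
    rw [h2]
  -- integrability in c
  have hpt2 : ∀ ω c, W c * g c ω
      = Real.sqrt (D / (2 * π)) * Real.exp (c * M T ω - (A T ω + D) / 2 * c ^ 2) := by
    intro ω c
    rw [hW, hg, mul_assoc, ← Real.exp_add]
    congr 2
    ring
  have hWgInt : ∀ ω, Integrable (fun c => W c * g c ω) := by
    intro ω
    have hsa : 0 < A T ω + D := by have := hAnn ω; linarith
    have := (gauss_integrable (A T ω + D) (M T ω) hsa).const_mul (Real.sqrt (D / (2 * π)))
    exact this.congr (Filter.Eventually.of_forall fun c => (hpt2 ω c).symm)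
  have hofF : ∀ ω, ENNReal.ofReal (F ω) = ∫⁻ c, ENNReal.ofReal (W c * g c ω) := by
    intro ω
    rw [key ω, MeasureTheory.ofReal_integral_eq_lintegral_ofReal (hWgInt ω)
      (Filter.Eventually.of_forall fun c => mul_nonneg (hWnn c) (hgnn c ω))]
  have hmeas : Measurable (Function.uncurry fun ω c => ENNReal.ofReal (W c * g c ω)) := by
    apply Measurable.ennreal_ofReal
    apply Measurable.mul
    · have : Measurable W := by
        rw [hW]
        exact (Real.measurable_exp.comp ((measurable_id.pow_const 2).const_mul
          (-(D / 2)))).const_mul _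
      exact this.comp measurable_snd
    · exact Real.measurable_exp.comp
        ((measurable_snd.mul (hMTm.comp measurable_fst)).sub
          (((measurable_snd.pow_const 2).div_const 2).mul (hATm.comp measurable_fst)))
  have hFm : Measurable F := by
    rw [hF]
    apply Measurable.mul
    · exact measurable_const.div ((hATm.add_const D).sqrt)
    · exact Real.measurable_exp.comp
        (((hMTm.div ((hATm.add_const D).sqrt.const_mul 2)).pow_const 2).const_mul 2)
  calc ∫ ω, F ω ∂μ = (∫⁻ ω, ENNReal.ofReal (F ω) ∂μ).toReal :=
        integral_eq_lintegral_of_nonneg_ae (Filter.Eventually.of_forall hFnn)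
          hFm.aestronglyMeasurable
    _ ≤ 1 := by
        apply ENNReal.toReal_le_of_le_ofReal zero_le_one
        rw [ENNReal.ofReal_one]
        calc ∫⁻ ω, ENNReal.ofReal (F ω) ∂μ
            = ∫⁻ ω, ∫⁻ c, ENNReal.ofReal (W c * g c ω) ∂volume ∂μ := by simp_rw [hofF]
          _ = ∫⁻ c, ∫⁻ ω, ENNReal.ofReal (W c * g c ω) ∂μ := by
              exact lintegral_lintegral_swap hmeas.aemeasurable
          _ ≤ ∫⁻ c, ENNReal.ofReal (W c) := by
              refine lintegral_mono fun c => ?_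
              rw [← MeasureTheory.ofReal_integral_eq_lintegral_ofReal
                ((hgInt c).const_mul (W c))
                (Filter.Eventually.of_forall fun ω => mul_nonneg (hWnn c) (hgnn c ω))]
              rw [integral_const_mul]
              exact ENNReal.ofReal_le_ofReal (mul_le_of_le_one_right (hWnn c) (hgle c))
          _ = ENNReal.ofReal (∫ c, W c) :=
              (MeasureTheory.ofReal_integral_eq_lintegral_ofReal hWint
                (Filter.Eventually.of_forall hWnn)).symm
          _ = 1 := by rw [hWval, ENNReal.ofReal_one]
end
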